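/- For positive reals a, γ with γ < a < 2γ, setting u₀ = 4γ(a−γ)/(a(4γ−a)) and r = (aγ/(2γ−a))(1−u₀)^{2−a/2γ}, the value (γ + a/2)²·u₀³/3 + (4γ/a²)(a−γ)·r²·(1−u₀)^{a/γ−1} equals γ²·η₁(a/γ), where η₁(x) = (4/3)(x+2)²(x−1)/(x³(4−x)). -/

import Mathlib

noncomputable def eta1 (x : ℝ) : ℝ := (4/3) * ((x + 2)^2 * (x - 1)) / (x^3 * (4 - x))

theorem stmt_14 (a γ u₀ r : ℝ) (hγ : 0 < γ) (h1 : γ < a) (h2 : a < 2 * γ)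
    (hu₀ : u₀ = 4 * γ * (a - γ) / (a * (4 * γ - a)))
    (hr : r = (a * γ / (2 * γ - a)) * (1 - u₀) ^ (2 - a / (2 * γ))) :
    (γ + a/2)^2 * u₀^3 / 3
      + (4 * γ / a^2) * (a - γ) * r^2 * (1 - u₀) ^ (a / γ - 1)
    = γ^2 * eta1 (a / γ) := by
  have ha : 0 < a := hγ.trans h1
  have h4a : 0 < 4 * γ - a := by linarith
  have h2a : 0 < 2 * γ - a := by linarith
  have hden : 0 < a * (4 * γ - a) := mul_pos ha h4a
  have h1u : 1 - u₀ = (4 * γ ^ 2 - a ^ 2) / (a * (4 * γ - a)) := by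
    rw [hu₀]; field_simp; ring
  have h1upos : 0 < 1 - u₀ := by
    rw [h1u]
    exact div_pos (by nlinarith) hden
  have hr2 : r ^ 2 * (1 - u₀) ^ (a / γ - 1)
      = (a * γ / (2 * γ - a)) ^ 2 * (1 - u₀) ^ (3 : ℕ) := by
    rw [hr, mul_pow, ← Real.rpow_natCast ((1 - u₀) ^ (2 - a / (2 * γ))) 2,
      ← Real.rpow_natCast (1 - u₀) 3,
      ← Real.rpow_mul h1upos.le, mul_assoc, ← Real.rpow_add h1upos]
    have hexp : (2 - a / (2 * γ)) * ((2:ℕ):ℝ) + (a / γ - 1) = ((3:ℕ):ℝ) := by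
      have hγ' : γ ≠ 0 := hγ.ne'
      push_cast
      field_simp
      ring
    rw [hexp]
  rw [mul_assoc (4 * γ / a ^ 2 * (a - γ)) (r^2), hr2, h1u, hu₀, eta1]
  have hγ' : γ ≠ 0 := hγ.ne'
  have ha' : a ≠ 0 := ha.ne'
  have h4a' : (4 * γ - a) ≠ 0 := h4a.ne'
  have h2a' : (2 * γ - a) ≠ 0 := h2a.ne'
  have hx3 : (a / γ) ^ 3 ≠ 0 := pow_ne_zero _ (div_ne_zero ha' hγ')
  have h4x : (4 - a / γ) ≠ 0 := by
    rw [sub_ne_zero]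
    intro h
    apply h4a'
    field_simp at h
    linarith
  have h2a'' : γ * 2 - a ≠ 0 := by intro h; apply h2a'; linarith
  have h4a'' : γ * 4 - a ≠ 0 := by intro h; apply h4a'; linarith
  field_simp
  ring
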